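/- Let α, β be complex numbers with |α| ≥ |β|, let p be a prime dividing a positive integer n, and suppose |α^{n/p} − β^{n/p}| ≤ (2/p)·|α|^{n/p} and α^{n/p} ≠ β^{n/p}. Then |α^n − β^n| ≥ |α^{n/p} − β^{n/p}| · |α|^{n(p−1)/p}. -/

import Mathlib

open Finset

lemma abs_pow_sub_pow_le_aux (x y : ℂ) (M : ℝ) (hx : ‖x‖ ≤ M)
    (hy : ‖y‖ ≤ M) : ∀ k : ℕ,
    ‖x ^ k - y ^ k‖ ≤ k * M ^ (k - 1) * ‖x - y‖ := by
  have hM : 0 ≤ M := le_trans (norm_nonneg x) hx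
  intro k
  induction k with
  | zero => simp
  | succ k ih =>
    have hid : x ^ (k + 1) - y ^ (k + 1) = x * (x ^ k - y ^ k) + (x - y) * y ^ k := by
      ring
    rw [hid]
    have h1 : ‖x * (x ^ k - y ^ k) + (x - y) * y ^ k‖
        ≤ ‖x‖ * ‖x ^ k - y ^ k‖
          + ‖x - y‖ * ‖y‖ ^ k := by
      refine (norm_add_le _ _).trans_eq ?_
      rw [norm_mul, norm_mul, norm_pow]
    have h2 : ‖x‖ * ‖x ^ k - y ^ k‖
        ≤ M * (k * M ^ (k - 1) * ‖x - y‖) :=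
      mul_le_mul hx ih (norm_nonneg _) hM
    have h3 : M * (k * M ^ (k - 1)) ≤ k * M ^ k := by
      rcases Nat.eq_zero_or_pos k with hk | hk
      · simp [hk]
      · have : M * (k * M ^ (k - 1)) = k * (M * M ^ (k - 1)) := by ring
        rw [this, ← pow_succ']
        have : k - 1 + 1 = k := by omega
        rw [this]
    have h4 : ‖x - y‖ * ‖y‖ ^ k ≤ ‖x - y‖ * M ^ k :=
      mul_le_mul_of_nonneg_left (pow_le_pow_left₀ (norm_nonneg y) hy k)
        (norm_nonneg _)
    have h5 : 0 ≤ ‖x - y‖ := norm_nonneg _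
    have h6 : M * (k * M ^ (k - 1) * ‖x - y‖) ≤ k * M ^ k * ‖x - y‖ := by
      calc M * (k * M ^ (k - 1) * ‖x - y‖)
          = M * (k * M ^ (k - 1)) * ‖x - y‖ := by ring
        _ ≤ k * M ^ k * ‖x - y‖ := by gcongr
    have hfin : (↑(k + 1) : ℝ) * M ^ (k + 1 - 1) * ‖x - y‖
        = k * M ^ k * ‖x - y‖ + ‖x - y‖ * M ^ k := by
      simp only [Nat.add_sub_cancel]
      push_cast
      ring
    rw [hfin]
    linarith

theorem stmt_6 (α β : ℂ) (hab : ‖β‖ ≤ ‖α‖)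
    (p n : ℕ) (hp : p.Prime) (hn : 0 < n) (hdvd : p ∣ n)
    (hsmall : ‖α ^ (n / p) - β ^ (n / p)‖ ≤ 2 / p * ‖α‖ ^ (n / p))
    (hne : α ^ (n / p) ≠ β ^ (n / p)) :
    ‖α ^ (n / p) - β ^ (n / p)‖ * ‖α‖ ^ ((n / p) * (p - 1)) ≤
      ‖α ^ n - β ^ n‖ := by
  set m := n / p with hm
  have hmp : m * p = n := Nat.div_mul_cancel hdvd
  set a := α ^ m with ha
  set b := β ^ m with hb
  have han : α ^ n = a ^ p := by rw [ha, ← pow_mul, hmp]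
  have hbn : β ^ n = b ^ p := by rw [hb, ← pow_mul, hmp]
  rw [han, hbn]
  set R := ‖α‖ with hR
  have haabs : ‖a‖ = R ^ m := by rw [ha, norm_pow]
  have hbabs : ‖b‖ ≤ R ^ m := by
    rw [hb, norm_pow]; exact pow_le_pow_left₀ (norm_nonneg _) hab m
  have hR0 : 0 ≤ R := norm_nonneg α
  have hexp : R ^ (m * (p - 1)) = (R ^ m) ^ (p - 1) := by rw [pow_mul]
  rw [hexp]
  set A := R ^ m with hA
  have hA0 : 0 ≤ A := pow_nonneg hR0 m
  set S := ∑ i ∈ range p, a ^ i * b ^ (p - 1 - i) with hS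
  have hgeom : a ^ p - b ^ p = S * (a - b) := (geom_sum₂_mul a b p).symm
  rw [hgeom, norm_mul, mul_comm]
  have hd0 : 0 < ‖a - b‖ := by
    rw [norm_pos_iff]; exact sub_ne_zero_of_ne hne
  apply mul_le_mul_of_nonneg_right _ (le_of_lt hd0)
  -- key : A ^ (p-1) ≤ abs S
  have hkey : (p : ℂ) * a ^ (p - 1) - S
      = ∑ i ∈ range p, a ^ i * (a ^ (p - 1 - i) - b ^ (p - 1 - i)) := by
    rw [Finset.sum_congr rfl (fun i _ => mul_sub (a ^ i) _ _), Finset.sum_sub_distrib, ← hS]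
    congr 1
    have h : ∀ i ∈ range p, a ^ i * a ^ (p - 1 - i) = a ^ (p - 1) := by
      intro i hi
      rw [← pow_add]
      congr 1
      have := Finset.mem_range.mp hi
      omega
    rw [Finset.sum_congr rfl h, Finset.sum_const, card_range, nsmul_eq_mul]
  have hterm : ∀ i ∈ range p,
      ‖a ^ i * (a ^ (p - 1 - i) - b ^ (p - 1 - i))‖
        ≤ ((p - 1 - i : ℕ) : ℝ) * A ^ (p - 2) * ‖a - b‖ := by
    intro i hi
    have hi' := Finset.mem_range.mp hi
    rw [norm_mul, norm_pow, haabs]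
    calc A ^ i * ‖a ^ (p - 1 - i) - b ^ (p - 1 - i)‖
        ≤ A ^ i * (((p - 1 - i : ℕ) : ℝ) * A ^ (p - 1 - i - 1) * ‖a - b‖) := by
          gcongr
          exact abs_pow_sub_pow_le_aux a b A (le_of_eq haabs) hbabs (p - 1 - i)
      _ ≤ ((p - 1 - i : ℕ) : ℝ) * A ^ (p - 2) * ‖a - b‖ := by
          rcases Nat.lt_or_ge i (p - 1) with h | h
          · have heq : A ^ i * A ^ (p - 1 - i - 1) = A ^ (p - 2) := by
              rw [← pow_add]; congr 1; omega
            rw [show A ^ i * (((p - 1 - i : ℕ) : ℝ) * A ^ (p - 1 - i - 1) * ‖a - b‖)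
                = ((p - 1 - i : ℕ) : ℝ) * (A ^ i * A ^ (p - 1 - i - 1)) * ‖a - b‖ by ring,
              heq]
          · have h0 : p - 1 - i = 0 := by omega
            simp [h0]
  set C : ℝ := ((p * (p - 1) / 2 : ℕ) : ℝ) with hC
  have hsum : ‖(p : ℂ) * a ^ (p - 1) - S‖
      ≤ C * A ^ (p - 2) * ‖a - b‖ := by
    rw [hkey]
    calc ‖∑ i ∈ range p, a ^ i * (a ^ (p - 1 - i) - b ^ (p - 1 - i))‖
        ≤ ∑ i ∈ range p, ‖a ^ i * (a ^ (p - 1 - i) - b ^ (p - 1 - i))‖ :=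
          norm_sum_le _ _
      _ ≤ ∑ i ∈ range p, ((p - 1 - i : ℕ) : ℝ) * A ^ (p - 2) * ‖a - b‖ :=
          Finset.sum_le_sum hterm
      _ = C * A ^ (p - 2) * ‖a - b‖ := by
          rw [← Finset.sum_mul, ← Finset.sum_mul, ← Nat.cast_sum]
          congr 3
          rw [Finset.sum_range_reflect (fun j => j) p, Finset.sum_range_id]
  -- arithmetic facts
  have hp2 : 2 ≤ p := hp.two_le
  have hCp : 2 * C = (p : ℝ) * ((p - 1 : ℕ) : ℝ) := by
    have he : Even (p * (p - 1)) := by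
      rcases Nat.even_or_odd p with h | h
      · exact h.mul_right _
      · exact (Nat.Odd.sub_odd h odd_one).mul_left _
    have h2 : p * (p - 1) / 2 * 2 = p * (p - 1) := Nat.div_mul_cancel he.two_dvd
    have h2' : ((p * (p - 1) / 2 : ℕ) : ℝ) * 2 = ((p * (p - 1) : ℕ) : ℝ) := by
      exact_mod_cast congrArg (Nat.cast : ℕ → ℝ) h2
    rw [hC, mul_comm, h2', Nat.cast_mul]
  have hp0 : (0 : ℝ) < p := by positivity
  have hCA : C * A ^ (p - 2) * (2 / p * A) = ((p - 1 : ℕ) : ℝ) * A ^ (p - 1) := by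
    have hAA : A ^ (p - 2) * A = A ^ (p - 1) := by
      rw [← pow_succ]; congr 1; omega
    have hp0' : (p : ℝ) ≠ 0 := ne_of_gt hp0
    rw [show C * A ^ (p - 2) * (2 / ↑p * A) = 2 * C * (A ^ (p - 2) * A) / ↑p by ring, hCp, hAA,
      show (↑p : ℝ) * ↑(p - 1) * A ^ (p - 1) / ↑p = ↑(p - 1) * A ^ (p - 1) * (↑p / ↑p) by ring,
      div_self hp0', mul_one]
  have hsum2 : ‖(p : ℂ) * a ^ (p - 1) - S‖
      ≤ ((p - 1 : ℕ) : ℝ) * A ^ (p - 1) := by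
    calc ‖(p : ℂ) * a ^ (p - 1) - S‖
        ≤ C * A ^ (p - 2) * ‖a - b‖ := hsum
      _ ≤ C * A ^ (p - 2) * (2 / p * A) :=
          mul_le_mul_of_nonneg_left hsmall (by positivity)
      _ = ((p - 1 : ℕ) : ℝ) * A ^ (p - 1) := hCA
  have hpa : ‖(p : ℂ) * a ^ (p - 1)‖ = (p : ℝ) * A ^ (p - 1) := by
    rw [norm_mul, norm_pow, haabs, Complex.norm_natCast]
  have htri : ‖(p : ℂ) * a ^ (p - 1)‖ - ‖S‖
      ≤ ‖(p : ℂ) * a ^ (p - 1) - S‖ := by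
    exact norm_sub_norm_le ((p : ℂ) * a ^ (p - 1)) S
  have hcast : (p : ℝ) - ((p - 1 : ℕ) : ℝ) = 1 := by
    have : ((p - 1 : ℕ) : ℝ) = (p : ℝ) - 1 := by
      push_cast [Nat.cast_sub (by omega : 1 ≤ p)]; ring
    rw [this]; ring
  nlinarith [hsum2, htri, hpa, pow_nonneg hA0 (p - 1)]
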